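/- Let G be a connected simple graph on a finite vertex set V, let M ∈ ℕ, let V' ⊆ V, and let f' : V' → ℤ. Then the following are equivalent: (1) there exist a root r ∈ V and an M-Lipschitz mapping f of (G, r) whose restriction to V' equals f'; (2) either f' is M-reachable and rooted (i.e., 0 ∈ f'(V')), or there exists a vertex r ∈ V \ V' such that the extension of f' to V' ∪ {r} sending r to 0 is M-reachable. -/
import Mathlib

private lemma lip_le_dist {V : Type*} (G : SimpleGraph V) (hG : G.Connected)
    (M : ℕ) (f : V → ℤ)
    (hf : ∀ u v : V, G.Adj u v → |f u - f v| ≤ (M : ℤ)) (u v : V) :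
    |f u - f v| ≤ (M : ℤ) * G.dist u v := by
  obtain ⟨p, hp⟩ := ((hG.preconnected u v)).exists_walk_length_eq_dist
  rw [← hp]
  clear hp
  induction p with
  | nil => simp
  | cons h q ih =>
    rename_i a b c
    have h1 := abs_sub_le (f a) (f b) (f c)
    have h2 := hf a b h
    have : ((SimpleGraph.Walk.cons h q).length : ℤ) = (q.length : ℤ) + 1 := by
      simp [SimpleGraph.Walk.length_cons]
    rw [this]
    calc |f a - f c| ≤ |f a - f b| + |f b - f c| := h1
      _ ≤ (M : ℤ) + (M : ℤ) * q.length := add_le_add h2 ih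
      _ = (M : ℤ) * ((q.length : ℤ) + 1) := by ring

private lemma ext_exists {V : Type*} [Fintype V] (G : SimpleGraph V) (hG : G.Connected)
    (M : ℕ) (S : Set V) (g : V → ℤ) (r : V) (hr : r ∈ S) (hgr : g r = 0)
    (hreach : ∀ u ∈ S, ∀ v ∈ S, |g u - g v| ≤ (M : ℤ) * G.dist u v) :
    ∃ f : V → ℤ, f r = 0 ∧ (∀ u v : V, G.Adj u v → |f u - f v| ≤ (M : ℤ)) ∧
      ∀ v ∈ S, f v = g v := by
  classical
  set S' : Finset V := Finset.univ.filter (· ∈ S) with hS'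
  have hne : S'.Nonempty := ⟨r, by simp [hS', hr]⟩
  set f : V → ℤ := fun v => S'.inf' hne (fun u => g u + (M : ℤ) * G.dist u v) with hfdef
  have hmem : ∀ v ∈ S, f v = g v := by
    intro v hv
    have h1 : f v ≤ g v := by
      have h0 : f v ≤ g v + (M : ℤ) * G.dist v v :=
        Finset.inf'_le (fun u => g u + (M : ℤ) * G.dist u v)
          (show v ∈ S' by simp [hS', hv])
      simpa [SimpleGraph.dist_self] using h0
    have h2 : g v ≤ f v := by
      apply Finset.le_inf'
      intro u hu
      have hu' : u ∈ S := by simpa [hS'] using hu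
      have habs : g v - g u ≤ (M : ℤ) * G.dist v u := (abs_le.mp (hreach v hv u hu')).2
      rw [SimpleGraph.dist_comm] at habs
      linarith
    omega
  have key : ∀ a b : V, G.Adj a b → f a ≤ f b + M := by
    intro a b hab
    obtain ⟨u₀, hu₀mem, hu₀⟩ := Finset.exists_mem_eq_inf' hne
      (fun u => g u + (M : ℤ) * G.dist u b)
    have hdab : G.dist u₀ a ≤ G.dist u₀ b + 1 := by
      have h3 : G.dist b a ≤ 1 := by
        have := SimpleGraph.dist_le (hab.symm.toWalk)
        simpa using this
      have := hG.dist_triangle (u := u₀) (v := b) (w := a)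
      omega
    have hfa : f a ≤ g u₀ + (M : ℤ) * G.dist u₀ a :=
      Finset.inf'_le (fun u => g u + (M : ℤ) * G.dist u a) hu₀mem
    have hcast : (G.dist u₀ a : ℤ) ≤ (G.dist u₀ b : ℤ) + 1 := by exact_mod_cast hdab
    have : f b = g u₀ + (M : ℤ) * G.dist u₀ b := hu₀
    nlinarith [Nat.cast_nonneg (α := ℤ) M]
  refine ⟨f, by rw [hmem r hr, hgr], ?_, hmem⟩
  intro u v huv
  have h1 := key u v huv
  have h2 := key v u huv.symm
  rw [abs_le]
  omega

theorem stmt_18 {V : Type*} [Fintype V] [DecidableEq V] (G : SimpleGraph V) (hG : G.Connected)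
    (M : ℕ) (V' : Set V) (f' : V → ℤ) :
    (∃ (r : V) (f : V → ℤ), f r = 0 ∧
        (∀ u v : V, G.Adj u v → |f u - f v| ≤ (M : ℤ)) ∧ ∀ v ∈ V', f v = f' v) ↔
    ((∀ u ∈ V', ∀ v ∈ V', |f' u - f' v| ≤ (M : ℤ) * G.dist u v) ∧ (∃ v ∈ V', f' v = 0)) ∨
      (∃ r : V, r ∉ V' ∧ ∀ u ∈ V' ∪ {r}, ∀ v ∈ V' ∪ {r},
        |Function.update f' r 0 u - Function.update f' r 0 v| ≤ (M : ℤ) * G.dist u v) := by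
  classical
  constructor
  · rintro ⟨r, f, hfr, hlip, hagree⟩
    have hd := lip_le_dist G hG M f hlip
    by_cases hrV : r ∈ V'
    · left
      refine ⟨fun u hu v hv => ?_, ⟨r, hrV, by rw [← hagree r hrV, hfr]⟩⟩
      rw [← hagree u hu, ← hagree v hv]
      exact hd u v
    · right
      refine ⟨r, hrV, ?_⟩
      have heq : ∀ u ∈ V' ∪ {r}, Function.update f' r 0 u = f u := by
        intro u hu
        rcases hu with hu | hu
        · rw [Function.update_of_ne (fun h : u = r => hrV (h ▸ hu)), hagree u hu]
        · rcases hu with rfl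
          rw [Function.update_self, hfr]
      intro u hu v hv
      rw [heq u hu, heq v hv]
      exact hd u v
  · rintro (⟨hreach, r, hrV, hr0⟩ | ⟨r, hrV, hreach⟩)
    · obtain ⟨f, h1, h2, h3⟩ := ext_exists G hG M V' f' r hrV hr0 hreach
      exact ⟨r, f, h1, h2, h3⟩
    · obtain ⟨f, h1, h2, h3⟩ := ext_exists G hG M (V' ∪ {r}) (Function.update f' r 0) r
        (Or.inr rfl) (Function.update_self r 0 f') hreach
      refine ⟨r, f, h1, h2, fun v hv => ?_⟩
      rw [h3 v (Or.inl hv), Function.update_of_ne (fun h : v = r => hrV (h ▸ hv))]
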